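/- For every k \in \mathbb{N}_0, \zeta_{EMS}(-k) = \sum_{i+j=k} \binom{k}{i} \frac{(-1)^j}{i+1} \zeta^{des}(-j), where \zeta_{EMS}(-k) := k! times the coefficient of (-t)^k in G(t) := (t-(e^t-1))/(t(e^t-1)) and \zeta^{des}(-j) := j! times the coefficient of (-t)^j in F(t) := ((1-t)e^t-1)/(e^t-1)^2. -/

import Mathlib

/-- The depth-one value attached to a one-variable power series `f`:
`k!` times the coefficient of `(-t)^k` in `f`. -/
noncomputable def zetaOne (f : PowerSeries ℚ) (k : ℕ) : ℚ :=
  (-1 : ℚ) ^ k * (k.factorial : ℚ) * PowerSeries.coeff k f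


private lemma zeta_term_aux (k a : ℕ) (hak : a ≤ k) (f : ℚ) :
    (k.factorial : ℚ) * (f * (1 / ((k - a + 1).factorial : ℚ))) =
    (k.choose a : ℚ) * ((-1:ℚ)^a / ((k - a : ℕ) + 1 : ℚ)) * ((-1:ℚ)^a * a.factorial * f) := by
  have hch : (k.choose a : ℚ) * a.factorial * (k - a).factorial = k.factorial := by
    exact_mod_cast congrArg (Nat.cast : ℕ → ℚ) (Nat.choose_mul_factorial_mul_factorial hak)
  have hfac : ((k - a + 1).factorial : ℚ) = ((k - a + 1 : ℕ) : ℚ) * ((k - a).factorial : ℚ) := by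
    exact_mod_cast congrArg (Nat.cast : ℕ → ℚ) (Nat.factorial_succ (k - a))
  have hcast : ((k - a + 1 : ℕ) : ℚ) = ((k - a : ℕ) : ℚ) + 1 := by push_cast; ring
  have hpow : ((-1:ℚ))^(a + a) = 1 := by
    rw [← two_mul, pow_mul]; norm_num
  have hne1 : (((k - a) : ℕ) + 1 : ℚ) ≠ 0 := by positivity
  have hne2 : ((k - a).factorial : ℚ) ≠ 0 := by exact_mod_cast (k - a).factorial_ne_zero
  rw [hfac, hcast]
  clear hak
  field_simp
  linear_combination (-f) * hch - f * ((k.choose a : ℚ) * a.factorial * (k - a).factorial) * hpow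

/-- For every `k ∈ ℕ₀`, `ζ_{EMS}(-k) = ∑_{i+j=k} C(k,i) (-1)^j/(i+1) ζ^{des}(-j)`,
where `ζ_{EMS}(-k) = k![(-t)^k] G(t)` with `G(t) = (t-(e^t-1))/(t(e^t-1))` and
`ζ^{des}(-j) = j![(-t)^j] F(t)` with `F(t) = ((1-t)e^t-1)/(e^t-1)^2`. -/
theorem zetaEMS_eq_sum_zetaDes (F G : PowerSeries ℚ)
    (hF : (PowerSeries.exp ℚ - 1) ^ 2 * F =
      (1 - PowerSeries.X) * PowerSeries.exp ℚ - 1)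
    (hG : (PowerSeries.X * (PowerSeries.exp ℚ - 1)) * G =
      PowerSeries.X - (PowerSeries.exp ℚ - 1)) (k : ℕ) :
    zetaOne G k =
      ∑ m ∈ Finset.HasAntidiagonal.antidiagonal k,
        (k.choose m.1 : ℚ) * ((-1 : ℚ) ^ m.2 / (m.1 + 1 : ℚ)) * zetaOne F m.2 := by
  classical
  set E := PowerSeries.exp ℚ with hE
  set G' := PowerSeries.rescale (-1 : ℚ) G with hG'
  have hEE : E * PowerSeries.rescale (-1 : ℚ) E = 1 :=
    PowerSeries.exp_mul_exp_neg_eq_one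
  have h1 := congrArg (PowerSeries.rescale (-1 : ℚ)) hG
  simp only [map_mul, map_sub, map_one, PowerSeries.rescale_neg_one_X] at h1
  -- h1 : (-X) * (rescale (-1) E - 1) * G' = -X - (rescale (-1) E - 1)
  have key : PowerSeries.X * G' * (E - 1) = F * (E - 1) * (E - 1) := by
    linear_combination E * h1 + (PowerSeries.X * G' - 1) * hEE - hF
  have hne : (E - 1 : PowerSeries ℚ) ≠ 0 := by
    intro h
    have := congrArg (PowerSeries.coeff 1) h
    simp [hE, PowerSeries.coeff_exp, PowerSeries.coeff_one] at this
  have key2 : PowerSeries.X * G' = F * (E - 1) := mul_right_cancel₀ hne key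
  have hcoeff := congrArg (PowerSeries.coeff (k + 1)) key2
  rw [PowerSeries.coeff_succ_X_mul, PowerSeries.coeff_mul] at hcoeff
  rw [hG', PowerSeries.coeff_rescale] at hcoeff
  rw [Finset.Nat.sum_antidiagonal_eq_sum_range_succ_mk] at hcoeff
  rw [Finset.sum_range_succ] at hcoeff
  have h0 : PowerSeries.coeff (k + 1 - (k + 1)) (E - 1) = 0 := by
    simp [hE, PowerSeries.coeff_one, PowerSeries.coeff_exp]
  rw [h0, mul_zero, add_zero] at hcoeff
  -- hcoeff : (-1)^k * coeff k G = ∑ a in range (k+1), coeff a F * coeff (k+1-a) (E-1)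
  rw [Finset.Nat.sum_antidiagonal_eq_sum_range_succ_mk]
  rw [← Finset.sum_range_reflect]
  have lhs_eq : zetaOne G k =
      (k.factorial : ℚ) * ((-1 : ℚ) ^ k * PowerSeries.coeff k G) := by
    rw [zetaOne]; ring
  rw [lhs_eq, hcoeff, Finset.mul_sum]
  refine Finset.sum_congr rfl fun a ha => ?_
  have hak : a ≤ k := Nat.lt_succ_iff.mp (Finset.mem_range.mp ha)
  have h1a : k + 1 - 1 - a = k - a := by omega
  have h2a : k - (k - a) = a := by omega
  rw [h1a, h2a]
  have hsub : k + 1 - a = (k - a) + 1 := by omega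
  have hcE : PowerSeries.coeff (k + 1 - a) (E - 1) =
      (1 : ℚ) / ((k + 1 - a).factorial : ℚ) := by
    rw [map_sub, hE, PowerSeries.coeff_exp, PowerSeries.coeff_one]
    have : k + 1 - a ≠ 0 := by omega
    simp [this]
  rw [hcE, zetaOne, Nat.choose_symm hak, hsub]
  exact zeta_term_aux k a hak _
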